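/- Let f : ℝ^d → ℝ be convex, bounded below, w convex differentiable and L_w-smooth with respect to a norm ‖·‖, and let θ_{s+1} = argmin_θ [f(θ) + (1/(2η)) D_w(θ, θ_s)] for s = 0,…,t−1, initialized at θ₀ = 0. Then for every θ: f(θ_t) − f(θ) ≤ (L_w / (4 η t)) ‖θ‖². -/

import Mathlib

open scoped RealInnerProductSpace
open Filter

private lemma bppa_slope_tendsto {d : ℕ} (w : EuclideanSpace ℝ (Fin d) → ℝ)
    (g y u : EuclideanSpace ℝ (Fin d)) (hg : HasGradientAt w g y) :
    Tendsto (fun l : ℝ => (w (y + l • u) - w y) / l) (nhdsWithin 0 (Set.Ioi 0)) (nhds ⟪g, u⟫) := by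
  have hline : HasDerivAt (fun l : ℝ => y + l • u) u 0 := by
    simpa using ((hasDerivAt_id (0:ℝ)).smul_const u).const_add y
  have hg' : HasFDerivAt w (InnerProductSpace.toDual ℝ _ g) ((fun l : ℝ => y + l • u) 0) := by
    simpa using hg.hasFDerivAt
  have hcomp : HasDerivAt (fun l : ℝ => w (y + l • u)) ⟪g, u⟫ 0 := by
    have h := hg'.comp_hasDerivAt 0 hline
    simp only [InnerProductSpace.toDual_apply_apply] at h
    exact h
  rw [hasDerivAt_iff_tendsto_slope] at hcomp
  have heq : (fun l : ℝ => (w (y + l • u) - w y) / l) = slope (fun l : ℝ => w (y + l • u)) 0 := by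
    funext l
    simp [slope_def_field]
  rw [heq]
  exact hcomp.mono_left (nhdsWithin_mono _ (fun x hx => ne_of_gt hx))

/-- Convex differentiable function lies above its tangent line. -/
private lemma bppa_tangent {d : ℕ} (w : EuclideanSpace ℝ (Fin d) → ℝ)
    (hw : ConvexOn ℝ Set.univ w)
    (g y u : EuclideanSpace ℝ (Fin d)) (hg : HasGradientAt w g y) :
    ⟪g, u⟫ ≤ w (y + u) - w y := by
  refine le_of_tendsto (bppa_slope_tendsto w g y u hg) ?_
  filter_upwards [Ioc_mem_nhdsGT_of_mem (Set.mem_Ico.2 ⟨le_refl (0:ℝ), zero_lt_one⟩)] with l hl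
  obtain ⟨hl0, hl1⟩ := hl
  rw [div_le_iff₀ hl0]
  have hc := hw.2 (Set.mem_univ (y + u)) (Set.mem_univ y) hl0.le (by linarith : (0:ℝ) ≤ 1 - l)
    (by ring)
  have hpt : l • (y + u) + (1 - l) • y = y + l • u := by module
  rw [hpt] at hc
  simp only [smul_eq_mul] at hc
  nlinarith [hc]

private lemma bppa_arith (η tt Lw n : ℝ) (hη : η ≠ 0) (ht : tt ≠ 0) :
    Lw/(4*η*tt) * n = (1/(2*η) * (Lw/2 * n))/tt := by
  field_simp
  ring

set_option maxHeartbeats 1000000 in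
/-- Convergence rate of the Bregman proximal point algorithm with constant stepsize:
`f(θ_t) − f(θ) ≤ (L_w / (4 η t)) ‖θ‖²` for all `θ`. -/
theorem bppa_loss_bound {d : ℕ}
    (f w : EuclideanSpace ℝ (Fin d) → ℝ)
    (gw : EuclideanSpace ℝ (Fin d) → EuclideanSpace ℝ (Fin d))
    (nrm : EuclideanSpace ℝ (Fin d) → ℝ)
    (Lw η : ℝ) (hLw : 0 < Lw) (hη : 0 < η)
    (hf : ConvexOn ℝ Set.univ f)
    (hbdd : BddBelow (Set.range f))
    (hw : ConvexOn ℝ Set.univ w)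
    (hw_diff : ∀ x, HasGradientAt w (gw x) x)
    (D : EuclideanSpace ℝ (Fin d) → EuclideanSpace ℝ (Fin d) → ℝ)
    (hD : ∀ x y, D x y = w x - w y - ⟪gw y, x - y⟫)
    (hsmooth : ∀ x y, D x y ≤ Lw/2 * (nrm (x - y))^2)
    (θ : ℕ → EuclideanSpace ℝ (Fin d))
    (hθ0 : θ 0 = 0)
    (hiter : ∀ s θ', f (θ (s+1)) + 1/(2*η) * D (θ (s+1)) (θ s)
        ≤ f θ' + 1/(2*η) * D θ' (θ s))
    (t : ℕ) (ht : 0 < t) :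
    ∀ v, f (θ t) - f v ≤ Lw/(4*η*t) * (nrm v)^2 := by
  intro v
  obtain ⟨c, hc⟩ : ∃ c : ℝ, c = 1/(2*η) := ⟨_, rfl⟩
  simp only [← hc] at hiter
  have hcpos : 0 < c := by rw [hc]; positivity
  -- Bregman divergence is nonnegative
  have hDnonneg : ∀ x y, 0 ≤ D x y := by
    intro x y
    have := bppa_tangent w hw (gw y) y (x - y) (hw_diff y)
    rw [hD x y]
    have hxy : y + (x - y) = x := by abel
    rw [hxy] at this
    linarith
  have hDself : ∀ x, D x x = 0 := by
    intro x
    rw [hD x x]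
    simp
  -- Key per-step inequality
  have hkey : ∀ s u, f (θ (s+1)) - f u ≤
      c * (D u (θ s) - D u (θ (s+1)) - D (θ (s+1)) (θ s)) := by
    intro s u
    set p := θ (s+1) with hp
    -- first order optimality via limit
    have hopt : ⟪gw (θ s), u - p⟫ - (f u - f p)/c ≤ ⟪gw p, u - p⟫ := by
      refine ge_of_tendsto (bppa_slope_tendsto w (gw p) p (u - p) (hw_diff p)) ?_
      filter_upwards [Ioc_mem_nhdsGT_of_mem (Set.mem_Ico.2 ⟨le_refl (0:ℝ), zero_lt_one⟩)]
        with l hl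
      obtain ⟨hl0, hl1⟩ := hl
      rw [le_div_iff₀ hl0]
      have hmix : p + l • (u - p) = l • u + (1 - l) • p := by module
      have hconv : f (p + l • (u - p)) ≤ l * f u + (1 - l) * f p := by
        rw [hmix]
        exact hf.2 (Set.mem_univ u) (Set.mem_univ p) hl0.le (by linarith) (by ring)
      have hit := hiter s (p + l • (u - p))
      rw [hD (p + l • (u - p)) (θ s), hD p (θ s)] at hit
      have hinner : (p + l • (u - p)) - θ s = (p - θ s) + l • (u - p) := by abel
      rw [hinner, inner_add_right, inner_smul_right] at hit
      have hcne : c ≠ 0 := ne_of_gt hcpos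
      have : l * (f u - f p) + c * (w (p + l • (u - p)) - w p - l * ⟪gw (θ s), u - p⟫) ≥ 0 := by
        nlinarith [hit]
      have h2 : l * ⟪gw (θ s), u - p⟫ - l * ((f u - f p)/c) ≤ w (p + l • (u - p)) - w p := by
        have hfrac : c * ((f u - f p)/c) = f u - f p := by field_simp
        nlinarith [this, hcpos]
      linarith [h2]
    -- three-point identity
    have h3 : ⟪gw p, u - p⟫ - ⟪gw (θ s), u - p⟫ =
        D u (θ s) - D u p - D p (θ s) := by
      rw [hD u (θ s), hD u p, hD p (θ s)]
      have e1 : u - θ s = (u - p) + (p - θ s) := by abel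
      rw [e1, inner_add_right]
      ring
    have hfc : f p - f u ≤ c * (⟪gw p, u - p⟫ - ⟪gw (θ s), u - p⟫) := by
      have hcne : c ≠ 0 := ne_of_gt hcpos
      have := hopt
      have h4 : (f u - f p)/c * c = f u - f p := by field_simp
      nlinarith [this]
    rw [h3] at hfc
    exact hfc
  -- monotonicity of the iterates
  have hmono : ∀ s, f (θ (s+1)) ≤ f (θ s) := by
    intro s
    have := hkey s (θ s)
    rw [hDself (θ s)] at this
    nlinarith [hDnonneg (θ s) (θ (s+1)), hDnonneg (θ (s+1)) (θ s), hcpos]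
  have hanti : ∀ m n, m ≤ n → f (θ n) ≤ f (θ m) := by
    intro m n hmn
    induction n with
    | zero => simp_all
    | succ k ih =>
      rcases Nat.eq_or_lt_of_le hmn with h | h
      · rw [h]
      · exact le_trans (hmono k) (ih (Nat.lt_succ_iff.mp h))
  -- telescoping sum
  have hsum : (t : ℝ) * (f (θ t) - f v) ≤ c * D v (θ 0) - c * D v (θ t) := by
    have hterm : ∀ s ∈ Finset.range t, f (θ t) - f v ≤ c * D v (θ s) - c * D v (θ (s+1)) := by
      intro s hs
      have h1 := hkey s v
      have h2 := hanti (s+1) t (Finset.mem_range.mp hs)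
      nlinarith [hDnonneg (θ (s+1)) (θ s), hcpos]
    calc (t : ℝ) * (f (θ t) - f v)
        = ∑ _s ∈ Finset.range t, (f (θ t) - f v) := by
          rw [Finset.sum_const, Finset.card_range, nsmul_eq_mul]
      _ ≤ ∑ s ∈ Finset.range t, (c * D v (θ s) - c * D v (θ (s+1))) :=
          Finset.sum_le_sum hterm
      _ = c * D v (θ 0) - c * D v (θ t) := Finset.sum_range_sub' (fun s => c * D v (θ s)) t
  have hD0 : D v (θ 0) ≤ Lw/2 * (nrm v)^2 := by
    rw [hθ0]
    have := hsmooth v 0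
    simpa using this
  have htpos : (0:ℝ) < t := by exact_mod_cast ht
  have hfin : (t : ℝ) * (f (θ t) - f v) ≤ c * (Lw/2 * (nrm v)^2) := by
    nlinarith [hDnonneg v (θ t), hcpos, hsum, hD0]
  rw [show Lw/(4*η*(t:ℝ)) * (nrm v)^2 = (c * (Lw/2 * (nrm v)^2))/(t:ℝ) by
    rw [hc]; exact bppa_arith η (t:ℝ) Lw ((nrm v)^2) hη.ne' htpos.ne']
  rw [le_div_iff₀ htpos]
  linarith [hfin]
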